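/- Let D, r, m be positive integers and let A be a random D×r real matrix whose entries are independent Gaussian random variables with mean 0 and variance 1/D. Then for all fixed matrices U, V ∈ ℝ^{r×m}, Var(⟨AU, AV⟩_F) = ( ‖V Uᵀ‖_F² + tr((V Uᵀ)²) ) / D, and consequently Var(⟨AU, AV⟩_F) ≤ 2 ‖U‖_F² ‖V‖_F² / D. -/

import Mathlib

open MeasureTheory ProbabilityTheory Matrix
open scoped NNReal

instance matrixMeasurableSpace {m n α : Type*} [MeasurableSpace α] :
    MeasurableSpace (Matrix m n α) :=
  inferInstanceAs (MeasurableSpace (m → n → α))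

/-- The product Gaussian measure on `D × r` real matrices whose entries are
independent Gaussians with mean `0` and variance `1/D`. -/
noncomputable def gaussianMatrix (D r : ℕ) : Measure (Matrix (Fin D) (Fin r) ℝ) :=
  Measure.pi fun _ : Fin D => Measure.pi fun _ : Fin r => gaussianReal 0 (D : ℝ≥0)⁻¹

/-- Frobenius inner product of two real matrices. -/
def frobInner {n m : Type*} [Fintype n] [Fintype m] (X Y : Matrix n m ℝ) : ℝ :=
  ∑ i, ∑ j, X i j * Y i j

/-- Frobenius norm of a real matrix. -/
noncomputable def frobNorm {n m : Type*} [Fintype n] [Fintype m] (X : Matrix n m ℝ) : ℝ :=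
  Real.sqrt (frobInner X X)


open Real
open scoped ENNReal



lemma integrable_pow_mul_exp_neg_mul_sq {b : ℝ} (hb : 0 < b) (n : ℕ) :
    Integrable fun x : ℝ => x ^ n * Real.exp (-b * x ^ 2) := by
  have hmeas : AEStronglyMeasurable (fun x : ℝ => x ^ n * Real.exp (-b * x ^ 2)) volume := by
    refine (Continuous.aestronglyMeasurable ?_)
    continuity
  refine Integrable.mono' ((integrable_exp_neg_mul_sq (half_pos hb)).const_mul
    (Real.exp ((n : ℝ) ^ 2 / (2 * b)))) hmeas (ae_of_all _ fun x => ?_)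
  rw [norm_mul, norm_pow, Real.norm_eq_abs, Real.norm_eq_abs,
    Real.abs_exp]
  have h1 : |x| ^ n ≤ Real.exp ((n : ℝ) * |x|) := by
    calc |x| ^ n ≤ Real.exp |x| ^ n :=
      pow_le_pow_left₀ (abs_nonneg x) (by linarith [Real.add_one_le_exp |x|]) n
    _ = Real.exp ((n : ℝ) * |x|) := by rw [← Real.exp_nat_mul]
  calc |x| ^ n * Real.exp (-b * x ^ 2)
      ≤ Real.exp ((n : ℝ) * |x|) * Real.exp (-b * x ^ 2) := by
        exact mul_le_mul_of_nonneg_right h1 (Real.exp_pos _).le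
    _ = Real.exp ((n : ℝ) * |x| + -b * x ^ 2) := by rw [← Real.exp_add]
    _ ≤ Real.exp ((n : ℝ) ^ 2 / (2 * b)) * Real.exp (-(b / 2) * x ^ 2) := by
        rw [← Real.exp_add]
        apply Real.exp_le_exp.2
        have hx2 : |x| ^ 2 = x ^ 2 := sq_abs x
        have hkey : (n : ℝ) ^ 2 / (2 * b) + -(b / 2) * x ^ 2 - ((n : ℝ) * |x| + -b * x ^ 2)
            = (b * |x| - (n : ℝ)) ^ 2 / (2 * b) := by
          field_simp; linear_combination (-b ^ 2) * sq_abs x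
        nlinarith [div_nonneg (sq_nonneg (b * |x| - (n : ℝ))) (by linarith : (0:ℝ) ≤ 2 * b)]

lemma gauss_I1 {b : ℝ} (hb : 0 < b) : ∫ x : ℝ, x ^ 1 * Real.exp (-b * x ^ 2) = 0 := by
  have h := MeasureTheory.integral_neg_eq_self (fun x : ℝ => x ^ 1 * Real.exp (-b * x ^ 2)) volume
  simp only [pow_one, neg_sq, neg_mul] at h
  rw [integral_neg] at h
  simp only [pow_one, neg_mul]
  linarith

lemma gauss_rec {b : ℝ} (hb : 0 < b) (n : ℕ) :
    ∫ x : ℝ, x ^ (n + 2) * Real.exp (-b * x ^ 2) =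
      ((n : ℝ) + 1) / (2 * b) * ∫ x : ℝ, x ^ n * Real.exp (-b * x ^ 2) := by
  set In := ∫ x : ℝ, x ^ n * Real.exp (-b * x ^ 2) with hIn
  set In2 := ∫ x : ℝ, x ^ (n + 2) * Real.exp (-b * x ^ 2) with hIn2
  have hderiv : ∀ x : ℝ, HasDerivAt (fun x : ℝ => x ^ (n + 1) * Real.exp (-b * x ^ 2))
      (((n : ℝ) + 1) * (x ^ n * Real.exp (-b * x ^ 2)) -
        (2 * b) * (x ^ (n + 2) * Real.exp (-b * x ^ 2))) x := by
    intro x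
    have h1 : HasDerivAt (fun x : ℝ => x ^ (n + 1)) (((n : ℝ) + 1) * x ^ n) x := by
      simpa using hasDerivAt_pow (n + 1) x
    have h2 : HasDerivAt (fun x : ℝ => -b * x ^ 2) (-b * (2 * x ^ 1)) x :=
      (hasDerivAt_pow 2 x).const_mul (-b)
    have h3 := h2.exp
    have h4 := h1.fun_mul h3
    refine h4.congr_deriv ?_
    ring
  have hf' : Integrable (fun x : ℝ => ((n : ℝ) + 1) * (x ^ n * Real.exp (-b * x ^ 2)) -
      (2 * b) * (x ^ (n + 2) * Real.exp (-b * x ^ 2))) volume :=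
    ((integrable_pow_mul_exp_neg_mul_sq hb n).const_mul _).sub
      ((integrable_pow_mul_exp_neg_mul_sq hb (n + 2)).const_mul _)
  have hf : Integrable (fun x : ℝ => x ^ (n + 1) * Real.exp (-b * x ^ 2)) volume :=
    integrable_pow_mul_exp_neg_mul_sq hb (n + 1)
  have key := MeasureTheory.integral_eq_zero_of_hasDerivAt_of_integrable hderiv hf' hf
  rw [integral_sub ((integrable_pow_mul_exp_neg_mul_sq hb n).const_mul _)
    ((integrable_pow_mul_exp_neg_mul_sq hb (n + 2)).const_mul _),
    integral_const_mul, integral_const_mul, ← hIn, ← hIn2] at key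
  field_simp
  linarith

lemma gauss_I3 {b : ℝ} (hb : 0 < b) : ∫ x : ℝ, x ^ 3 * Real.exp (-b * x ^ 2) = 0 := by
  have h := gauss_rec hb 1
  rw [gauss_I1 hb] at h
  simpa using h

lemma gauss_I0 {b : ℝ} (hb : 0 < b) :
    ∫ x : ℝ, x ^ 0 * Real.exp (-b * x ^ 2) = Real.sqrt (π / b) := by
  simpa using integral_gaussian b

lemma gauss_I2 {b : ℝ} (hb : 0 < b) :
    ∫ x : ℝ, x ^ 2 * Real.exp (-b * x ^ 2) = 1 / (2 * b) * Real.sqrt (π / b) := by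
  have h := gauss_rec hb 0
  rw [gauss_I0 hb] at h
  simpa using h

lemma gauss_I4 {b : ℝ} (hb : 0 < b) :
    ∫ x : ℝ, x ^ 4 * Real.exp (-b * x ^ 2) = 3 / (4 * b ^ 2) * Real.sqrt (π / b) := by
  have h := gauss_rec hb 2
  rw [gauss_I2 hb] at h
  rw [h]
  field_simp
  ring



section Moments

variable {v : ℝ≥0} (hv : v ≠ 0)

lemma vR_pos (hv : v ≠ 0) : 0 < (v : ℝ) := NNReal.coe_pos.mpr (zero_lt_iff.mpr hv)

lemma b_pos (hv : v ≠ 0) : 0 < (2 * (v : ℝ))⁻¹ := by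
  have := vR_pos hv; positivity

lemma gaussian_pdf_eq (hv : v ≠ 0) (x : ℝ) :
    gaussianPDFReal 0 v x =
      (Real.sqrt (2 * π * v))⁻¹ * Real.exp (-(2 * (v : ℝ))⁻¹ * x ^ 2) := by
  have := vR_pos hv
  rw [gaussianPDFReal]
  congr 1
  rw [sub_zero]
  congr 1
  field_simp

lemma integral_gaussianReal_eq (hv : v ≠ 0) (g : ℝ → ℝ) :
    ∫ x, g x ∂(gaussianReal 0 v) = ∫ x, gaussianPDFReal 0 v x * g x := by
  rw [gaussianReal_of_var_ne_zero 0 hv]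
  have hmeas : Measurable fun x => (gaussianPDFReal 0 v x).toNNReal :=
    (measurable_gaussianPDFReal 0 v).real_toNNReal
  have : (volume : Measure ℝ).withDensity (gaussianPDF 0 v) =
      (volume : Measure ℝ).withDensity fun x => ((gaussianPDFReal 0 v x).toNNReal : ℝ≥0∞) := rfl
  rw [this, integral_withDensity_eq_integral_smul hmeas]
  congr 1
  funext x
  rw [NNReal.smul_def, smul_eq_mul, Real.coe_toNNReal _ (gaussianPDFReal_nonneg 0 v x)]

lemma integrable_pow_gaussianReal (hv : v ≠ 0) (n : ℕ) :
    Integrable (fun x : ℝ => x ^ n) (gaussianReal 0 v) := by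
  rw [gaussianReal_of_var_ne_zero 0 hv]
  have hmeas : Measurable fun x => (gaussianPDFReal 0 v x).toNNReal :=
    (measurable_gaussianPDFReal 0 v).real_toNNReal
  have h1 : (volume : Measure ℝ).withDensity (gaussianPDF 0 v) =
      (volume : Measure ℝ).withDensity fun x => ((gaussianPDFReal 0 v x).toNNReal : ℝ≥0∞) := rfl
  rw [h1, integrable_withDensity_iff_integrable_smul hmeas]
  have : (fun x : ℝ => (gaussianPDFReal 0 v x).toNNReal • (x ^ n)) =
      fun x : ℝ => (Real.sqrt (2 * π * v))⁻¹ * (x ^ n * Real.exp (-(2 * (v : ℝ))⁻¹ * x ^ 2)) := by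
    funext x
    rw [NNReal.smul_def, smul_eq_mul, Real.coe_toNNReal _ (gaussianPDFReal_nonneg 0 v x),
      gaussian_pdf_eq hv]
    ring
  rw [this]
  exact (integrable_pow_mul_exp_neg_mul_sq (b_pos hv) n).const_mul _

lemma gmom_eq (hv : v ≠ 0) (n : ℕ) :
    ∫ x, x ^ n ∂(gaussianReal 0 v) =
      (Real.sqrt (2 * π * v))⁻¹ * ∫ x : ℝ, x ^ n * Real.exp (-(2 * (v : ℝ))⁻¹ * x ^ 2) := by
  rw [integral_gaussianReal_eq hv]
  rw [← integral_const_mul]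
  congr 1
  funext x
  rw [gaussian_pdf_eq hv]
  ring

lemma gmom_c_I0 (hv : v ≠ 0) :
    (Real.sqrt (2 * π * v))⁻¹ * ∫ x : ℝ, x ^ 0 * Real.exp (-(2 * (v : ℝ))⁻¹ * x ^ 2) = 1 := by
  have h := integral_gaussianPDFReal_eq_one 0 hv
  rw [← h, ← integral_const_mul]
  congr 1
  funext x
  rw [gaussian_pdf_eq hv]
  ring

lemma gmom_zero (hv : v ≠ 0) : ∫ x, x ^ 0 ∂(gaussianReal 0 v) = 1 := by
  rw [gmom_eq hv, gmom_c_I0 hv]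

lemma gmom_one (hv : v ≠ 0) : ∫ x, x ^ 1 ∂(gaussianReal 0 v) = 0 := by
  rw [gmom_eq hv, gauss_I1 (b_pos hv), mul_zero]

lemma gmom_three (hv : v ≠ 0) : ∫ x, x ^ 3 ∂(gaussianReal 0 v) = 0 := by
  rw [gmom_eq hv, gauss_I3 (b_pos hv), mul_zero]

lemma gmom_two (hv : v ≠ 0) : ∫ x, x ^ 2 ∂(gaussianReal 0 v) = (v : ℝ) := by
  have h0 := gmom_c_I0 hv
  rw [gauss_I0 (b_pos hv)] at h0
  rw [gmom_eq hv, gauss_I2 (b_pos hv)]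
  have hb := b_pos hv
  have hv' := vR_pos hv
  have : (1 : ℝ) / (2 * (2 * (v : ℝ))⁻¹) = (v : ℝ) := by field_simp
  rw [← mul_assoc, mul_comm ((Real.sqrt (2 * π * v))⁻¹) _, mul_assoc, h0, mul_one, this]

lemma gmom_four (hv : v ≠ 0) : ∫ x, x ^ 4 ∂(gaussianReal 0 v) = 3 * (v : ℝ) ^ 2 := by
  have h0 := gmom_c_I0 hv
  rw [gauss_I0 (b_pos hv)] at h0
  rw [gmom_eq hv, gauss_I4 (b_pos hv)]
  have hv' := vR_pos hv
  have : (3 : ℝ) / (4 * ((2 * (v : ℝ))⁻¹) ^ 2) = 3 * (v : ℝ) ^ 2 := by field_simp; ring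
  rw [← mul_assoc, mul_comm ((Real.sqrt (2 * π * v))⁻¹) _, mul_assoc, h0, mul_one, this]

end Moments


/-- Fubini for a finite product of copies of a sigma-finite measure. -/
lemma integral_pi_prod {ι : Type*} [Fintype ι] {E : Type*} [MeasurableSpace E]
    (μ : Measure E) [SigmaFinite μ] (f : ι → E → ℝ) :
    ∫ x : ι → E, ∏ i, f i (x i) ∂(Measure.pi fun _ => μ) = ∏ i, ∫ x, f i x ∂μ := by
  letI : MeasureSpace E := ⟨μ⟩
  exact MeasureTheory.integral_fintype_prod_eq_prod f

lemma integrable_pi_prod {ι : Type*} [Fintype ι] {E : Type*} [MeasurableSpace E]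
    (μ : Measure E) [SigmaFinite μ] (f : ι → E → ℝ) (hf : ∀ i, Integrable (f i) μ) :
    Integrable (fun x : ι → E => ∏ i, f i (x i)) (Measure.pi fun _ => μ) := by
  letI : MeasureSpace E := ⟨μ⟩
  exact MeasureTheory.Integrable.fintype_prod hf



section Rows

variable {r : ℕ} {v : ℝ≥0}

/-- exponent count functions -/
def cnt2 (k l j : Fin r) : ℕ := (if k = j then 1 else 0) + (if l = j then 1 else 0)

def cnt4 (k l p q j : Fin r) : ℕ :=
  (if k = j then 1 else 0) + ((if l = j then 1 else 0) +
    ((if p = j then 1 else 0) + (if q = j then 1 else 0)))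

lemma prod_pow_single (x : Fin r → ℝ) (k : Fin r) (c : ℕ) :
    ∏ j, x j ^ (if k = j then c else 0) = x k ^ c := by
  have h : ∀ j, x j ^ (if k = j then c else 0) = if k = j then x j ^ c else 1 := by
    intro j; split_ifs <;> simp
  rw [Finset.prod_congr rfl fun j _ => h j, Finset.prod_ite_eq]
  simp

lemma rep2 (x : Fin r → ℝ) (k l : Fin r) :
    x k * x l = ∏ j, x j ^ cnt2 k l j := by
  simp only [cnt2, pow_add, Finset.prod_mul_distrib, prod_pow_single, pow_one]

lemma rep4 (x : Fin r → ℝ) (k l p q : Fin r) :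
    x k * x l * x p * x q = ∏ j, x j ^ cnt4 k l p q j := by
  simp only [cnt4, pow_add, Finset.prod_mul_distrib, prod_pow_single, pow_one]
  ring

lemma prod_M_single (hv : v ≠ 0) (k : Fin r) (c : ℕ) :
    ∏ j : Fin r, ∫ t, t ^ (if k = j then c else 0) ∂(gaussianReal 0 v) =
      ∫ t, t ^ c ∂(gaussianReal 0 v) := by
  have h : ∀ j : Fin r, (∫ t, t ^ (if k = j then c else 0) ∂(gaussianReal 0 v)) =
      if k = j then ∫ t, t ^ c ∂(gaussianReal 0 v) else 1 := by
    intro j; split_ifs with h1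
    · rfl
    · exact gmom_zero hv
  rw [Finset.prod_congr rfl fun j _ => h j, Finset.prod_ite_eq]
  simp

lemma prod_M_pair (hv : v ≠ 0) {k l : Fin r} (hkl : k ≠ l) (a b : ℕ) :
    ∏ j : Fin r, ∫ t, t ^ ((if k = j then a else 0) + (if l = j then b else 0))
        ∂(gaussianReal 0 v) =
      (∫ t, t ^ a ∂(gaussianReal 0 v)) * ∫ t, t ^ b ∂(gaussianReal 0 v) := by
  have h : ∀ j : Fin r, (∫ t, t ^ ((if k = j then a else 0) + (if l = j then b else 0))
      ∂(gaussianReal 0 v)) =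
      (if k = j then ∫ t, t ^ a ∂(gaussianReal 0 v) else 1) *
        (if l = j then ∫ t, t ^ b ∂(gaussianReal 0 v) else 1) := by
    intro j; split_ifs with h1 h2
    · exact absurd (h1.trans h2.symm) hkl
    · simp
    · simp
    · simp [gmom_zero hv]
  rw [Finset.prod_congr rfl fun j _ => h j, Finset.prod_mul_distrib,
    Finset.prod_ite_eq, Finset.prod_ite_eq]
  simp

lemma prod_M_odd (hv : v ≠ 0) (e : Fin r → ℕ) (j0 : Fin r) (h : e j0 = 1 ∨ e j0 = 3) :
    ∏ j : Fin r, ∫ t, t ^ e j ∂(gaussianReal 0 v) = 0 := by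
  refine Finset.prod_eq_zero (Finset.mem_univ j0) ?_
  rcases h with h | h <;> rw [h]
  · exact gmom_one hv
  · exact gmom_three hv

lemma mono2 (hv : v ≠ 0) (k l : Fin r) :
    ∫ x : Fin r → ℝ, x k * x l ∂(Measure.pi fun _ : Fin r => gaussianReal 0 v) =
      if k = l then (v : ℝ) else 0 := by
  have step : ∫ x : Fin r → ℝ, x k * x l ∂(Measure.pi fun _ : Fin r => gaussianReal 0 v) =
      ∏ j : Fin r, ∫ t, t ^ cnt2 k l j ∂(gaussianReal 0 v) := by
    rw [show (fun x : Fin r → ℝ => x k * x l) = fun x => ∏ j, x j ^ cnt2 k l j from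
      funext fun x => rep2 x k l]
    exact integral_pi_prod (gaussianReal 0 v) (fun j t => t ^ cnt2 k l j)
  rw [step]
  by_cases hkl : k = l
  · subst hkl
    have h : ∀ j, cnt2 k k j = if k = j then 2 else 0 := by
      intro j; unfold cnt2; split_ifs <;> norm_num
    rw [Finset.prod_congr rfl fun j _ => by rw [h j], prod_M_single hv, gmom_two hv, if_pos rfl]
  · rw [if_neg hkl]
    refine prod_M_odd hv _ k (Or.inl ?_)
    unfold cnt2
    rw [if_pos rfl, if_neg (Ne.symm hkl)]

lemma integrable_mono2 (hv : v ≠ 0) (k l : Fin r) :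
    Integrable (fun x : Fin r → ℝ => x k * x l)
      (Measure.pi fun _ : Fin r => gaussianReal 0 v) := by
  rw [show (fun x : Fin r → ℝ => x k * x l) = fun x => ∏ j, x j ^ cnt2 k l j from
    funext fun x => rep2 x k l]
  exact integrable_pi_prod _ _ fun j => integrable_pow_gaussianReal hv _

lemma integrable_mono4 (hv : v ≠ 0) (k l p q : Fin r) :
    Integrable (fun x : Fin r → ℝ => x k * x l * x p * x q)
      (Measure.pi fun _ : Fin r => gaussianReal 0 v) := by
  rw [show (fun x : Fin r → ℝ => x k * x l * x p * x q) = fun x => ∏ j, x j ^ cnt4 k l p q j from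
    funext fun x => rep4 x k l p q]
  exact integrable_pi_prod _ _ fun j => integrable_pow_gaussianReal hv _

lemma mono4 (hv : v ≠ 0) (k l p q : Fin r) :
    ∫ x : Fin r → ℝ, x k * x l * x p * x q ∂(Measure.pi fun _ : Fin r => gaussianReal 0 v) =
      (v : ℝ) ^ 2 * ((if k = l ∧ p = q then 1 else 0) + (if k = p ∧ l = q then 1 else 0) +
        (if k = q ∧ l = p then 1 else 0)) := by
  have step : ∫ x : Fin r → ℝ, x k * x l * x p * x q
        ∂(Measure.pi fun _ : Fin r => gaussianReal 0 v) =
      ∏ j : Fin r, ∫ t, t ^ cnt4 k l p q j ∂(gaussianReal 0 v) := by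
    rw [show (fun x : Fin r → ℝ => x k * x l * x p * x q) =
      fun x => ∏ j, x j ^ cnt4 k l p q j from funext fun x => rep4 x k l p q]
    exact integral_pi_prod (gaussianReal 0 v) (fun j t => t ^ cnt4 k l p q j)
  rw [step]
  by_cases hkl : k = l
  · subst hkl
    by_cases hpq : p = q
    · subst hpq
      by_cases hkp : k = p
      · subst hkp
        have h : ∀ j, cnt4 k k k k j = if k = j then 4 else 0 := by
          intro j; unfold cnt4; split_ifs <;> norm_num
        rw [Finset.prod_congr rfl fun j _ => by rw [h j], prod_M_single hv, gmom_four hv]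
        simp
        ring
      · have h : ∀ j, cnt4 k k p p j = (if k = j then 2 else 0) + (if p = j then 2 else 0) := by
          intro j; unfold cnt4; split_ifs <;> norm_num
        rw [Finset.prod_congr rfl fun j _ => by rw [h j], prod_M_pair hv hkp, gmom_two hv]
        simp [hkp]
        ring
    · -- k = l, p ≠ q : zero
      have hz : ∏ j : Fin r, ∫ t, t ^ cnt4 k k p q j ∂(gaussianReal 0 v) = 0 := by
        refine prod_M_odd hv _ p ?_
        unfold cnt4
        rcases eq_or_ne k p with h | h <;> simp [h, Ne.symm hpq] <;> omega
      have h2 : ¬(k = p ∧ k = q) := fun h => hpq (h.1.symm.trans h.2)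
      have h3 : ¬(k = q ∧ k = p) := fun h => hpq (h.2.symm.trans h.1)
      rw [hz]
      simp [hpq, h2, h3]
  · by_cases hpq : p = q
    · subst hpq
      have hz : ∏ j : Fin r, ∫ t, t ^ cnt4 k l p p j ∂(gaussianReal 0 v) = 0 := by
        refine prod_M_odd hv _ k ?_
        unfold cnt4
        rcases eq_or_ne p k with h | h <;> simp [h, Ne.symm hkl] <;> omega
      have h2 : ¬(k = p ∧ l = p) := fun h => hkl (h.1.trans h.2.symm)
      rw [hz]
      simp [hkl, h2]
    · by_cases hkp : k = p
      · subst hkp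
        by_cases hlq : l = q
        · subst hlq
          have h : ∀ j, cnt4 k l k l j = (if k = j then 2 else 0) + (if l = j then 2 else 0) := by
            intro j; unfold cnt4; split_ifs <;> norm_num
          rw [Finset.prod_congr rfl fun j _ => by rw [h j], prod_M_pair hv hkl, gmom_two hv]
          simp [hkl, fun h : k = l ∧ l = k => hkl h.1]
          ring
        · have hz : ∏ j : Fin r, ∫ t, t ^ cnt4 k l k q j ∂(gaussianReal 0 v) = 0 := by
            refine prod_M_odd hv _ l (Or.inl ?_)
            unfold cnt4
            simp [hkl, Ne.symm hlq]
          have h3 : ¬(k = q ∧ l = k) := fun h => hkl h.2.symm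
          rw [hz]
          simp [hkl, hlq, h3]
      · by_cases hkq : k = q
        · subst hkq
          by_cases hlp : l = p
          · subst hlp
            have h : ∀ j, cnt4 k l l k j = (if k = j then 2 else 0) + (if l = j then 2 else 0) := by
              intro j; unfold cnt4; split_ifs <;> norm_num
            rw [Finset.prod_congr rfl fun j _ => by rw [h j], prod_M_pair hv hkl, gmom_two hv]
            simp [hkl, fun h : k = l ∧ l = k => hkl h.1]
            ring
          · have hz : ∏ j : Fin r, ∫ t, t ^ cnt4 k l p k j ∂(gaussianReal 0 v) = 0 := by
              refine prod_M_odd hv _ p (Or.inl ?_)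
              unfold cnt4
              simp [hkp, hlp]
            have h1 : ¬(k = l ∧ p = k) := fun h => hkl h.1
            have h2 : ¬(k = p ∧ l = k) := fun h => hkp h.1
            have h3 : ¬(k = k ∧ l = p) := fun h => hlp h.2
            rw [hz]
            simp [h1, h2, h3, hlp]
        · have hz : ∏ j : Fin r, ∫ t, t ^ cnt4 k l p q j ∂(gaussianReal 0 v) = 0 := by
            refine prod_M_odd hv _ k (Or.inl ?_)
            unfold cnt4
            rw [if_pos rfl, if_neg (show ¬l = k from fun h => hkl h.symm),
              if_neg (show ¬p = k from fun h => hkp h.symm),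
              if_neg (show ¬q = k from fun h => hkq h.symm)]
          rw [hz, if_neg (show ¬(k = l ∧ p = q) from fun h => hkl h.1),
            if_neg (show ¬(k = p ∧ l = q) from fun h => hkp h.1),
            if_neg (show ¬(k = q ∧ l = p) from fun h => hkq h.1)]
          norm_num

end Rows


lemma sum_eval {r : ℕ} (N : Matrix (Fin r) (Fin r) ℝ) :
    ∑ k, ∑ p, ∑ l, ∑ s, N k l * N p s *
        ((if k = l ∧ p = s then (1:ℝ) else 0) + (if k = p ∧ l = s then 1 else 0) +
          (if k = s ∧ l = p then 1 else 0)) =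
      (∑ k, N k k) ^ 2 + (∑ k, ∑ l, N k l * N k l) + (∑ k, ∑ l, N k l * N l k) := by
  have expand : ∀ k p l s : Fin r, N k l * N p s *
      ((if k = l ∧ p = s then (1:ℝ) else 0) + (if k = p ∧ l = s then 1 else 0) +
        (if k = s ∧ l = p then 1 else 0)) =
      (if k = l then 1 else 0) * (if p = s then 1 else 0) * (N k l * N p s) +
      (if k = p then 1 else 0) * (if l = s then 1 else 0) * (N k l * N p s) +
      (if k = s then 1 else 0) * (if l = p then 1 else 0) * (N k l * N p s) := by
    intro k p l s
    by_cases h1 : k = l <;> by_cases h2 : p = s <;> by_cases h3 : k = p <;>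
      by_cases h4 : l = s <;> by_cases h5 : k = s <;> by_cases h6 : l = p <;>
      simp [h1, h2, h3, h4, h5, h6] <;> first | (split_ifs <;> ring) | ring
  simp only [expand, Finset.sum_add_distrib]
  congr 1
  · congr 1
    · -- first: diagonal squares
      rw [sq]
      rw [Finset.sum_mul_sum]
      refine Finset.sum_congr rfl fun k _ => Finset.sum_congr rfl fun p _ => ?_
      -- ∑ l, ∑ s, [k=l][p=s] N k l N p s = N k k * N p p
      simp [ite_mul, Finset.sum_ite_eq]
    · refine Finset.sum_congr rfl fun k _ => ?_
      rw [Finset.sum_comm]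
      -- ∑ p ∑ l ∑ s [k=p][l=s] Nkl Nps = ∑ l, N k l * N k l
      refine Finset.sum_congr rfl fun l _ => ?_
      simp [ite_mul, Finset.sum_ite_eq]
  · refine Finset.sum_congr rfl fun k _ => ?_
    rw [Finset.sum_comm]
    refine Finset.sum_congr rfl fun l _ => ?_
    -- ∑ p ∑ s [k=s][l=p] N k l N p s = N k l * N l k
    simp [ite_mul, Finset.sum_ite_eq]


section Rows
variable {r : ℕ} {v : ℝ≥0}


/-- The row quadratic form. -/
def qf (N : Matrix (Fin r) (Fin r) ℝ) (x : Fin r → ℝ) : ℝ :=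
  ∑ k, ∑ l, N k l * (x k * x l)

lemma integrable_qf (hv : v ≠ 0) (N : Matrix (Fin r) (Fin r) ℝ) :
    Integrable (qf N) (Measure.pi fun _ : Fin r => gaussianReal 0 v) := by
  apply integrable_finset_sum
  intro k _
  apply integrable_finset_sum
  intro l _
  exact (integrable_mono2 hv k l).const_mul _

lemma qf_sq (N : Matrix (Fin r) (Fin r) ℝ) (x : Fin r → ℝ) :
    qf N x ^ 2 = ∑ k, ∑ p, ∑ l, ∑ s, (N k l * N p s) * (x k * x l * x p * x s) := by
  rw [sq, qf, Finset.sum_mul_sum]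
  refine Finset.sum_congr rfl fun k _ => Finset.sum_congr rfl fun p _ => ?_
  rw [Finset.sum_mul_sum]
  refine Finset.sum_congr rfl fun l _ => Finset.sum_congr rfl fun s _ => ?_
  ring

lemma integrable_qf_sq (hv : v ≠ 0) (N : Matrix (Fin r) (Fin r) ℝ) :
    Integrable (fun x => qf N x ^ 2) (Measure.pi fun _ : Fin r => gaussianReal 0 v) := by
  rw [show (fun x : Fin r → ℝ => qf N x ^ 2) =
    fun x => ∑ k, ∑ p, ∑ l, ∑ s, (N k l * N p s) * (x k * x l * x p * x s) from
      funext fun x => qf_sq N x]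
  apply integrable_finset_sum; intro k _
  apply integrable_finset_sum; intro p _
  apply integrable_finset_sum; intro l _
  apply integrable_finset_sum; intro s _
  exact (integrable_mono4 hv k l p s).const_mul _

lemma integral_qf (hv : v ≠ 0) (N : Matrix (Fin r) (Fin r) ℝ) :
    ∫ x, qf N x ∂(Measure.pi fun _ : Fin r => gaussianReal 0 v) = (v : ℝ) * ∑ k, N k k := by
  unfold qf
  rw [integral_finset_sum _ fun k _ => integrable_finset_sum _
    fun l _ => (integrable_mono2 hv k l).const_mul (N k l)]
  have : ∀ k : Fin r, ∫ x : Fin r → ℝ, ∑ l, N k l * (x k * x l)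
      ∂(Measure.pi fun _ : Fin r => gaussianReal 0 v) = N k k * (v : ℝ) := by
    intro k
    rw [integral_finset_sum _ fun l _ => (integrable_mono2 hv k l).const_mul (N k l)]
    have h : ∀ l : Fin r, ∫ x : Fin r → ℝ, N k l * (x k * x l)
        ∂(Measure.pi fun _ : Fin r => gaussianReal 0 v) =
        N k l * if k = l then (v : ℝ) else 0 := by
      intro l
      rw [integral_const_mul, mono2 hv]
    simp only [h, mul_ite, mul_zero, Finset.sum_ite_eq, Finset.mem_univ, if_true]
  rw [Finset.sum_congr rfl fun k _ => this k, ← Finset.sum_mul]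
  ring

lemma integral_qf_sq (hv : v ≠ 0) (N : Matrix (Fin r) (Fin r) ℝ) :
    ∫ x, qf N x ^ 2 ∂(Measure.pi fun _ : Fin r => gaussianReal 0 v) =
      (v : ℝ) ^ 2 * ((∑ k, N k k) ^ 2 + (∑ k, ∑ l, N k l * N k l) +
        (∑ k, ∑ l, N k l * N l k)) := by
  rw [show (fun x : Fin r → ℝ => qf N x ^ 2) =
    fun x => ∑ k, ∑ p, ∑ l, ∑ s, (N k l * N p s) * (x k * x l * x p * x s) from
      funext fun x => qf_sq N x]
  rw [integral_finset_sum _ fun k _ => integrable_finset_sum _ fun p _ =>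
    integrable_finset_sum _ fun l _ => integrable_finset_sum _ fun s _ =>
      (integrable_mono4 hv k l p s).const_mul _]
  have h1 : ∀ k : Fin r, ∫ x : Fin r → ℝ, ∑ p, ∑ l, ∑ s, (N k l * N p s) * (x k * x l * x p * x s)
      ∂(Measure.pi fun _ : Fin r => gaussianReal 0 v) =
      ∑ p, ∑ l, ∑ s, (N k l * N p s) * ((v : ℝ) ^ 2 *
        ((if k = l ∧ p = s then 1 else 0) + (if k = p ∧ l = s then 1 else 0) +
          (if k = s ∧ l = p then 1 else 0))) := by
    intro k
    rw [integral_finset_sum _ fun p _ => integrable_finset_sum _ fun l _ =>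
      integrable_finset_sum _ fun s _ => (integrable_mono4 hv k l p s).const_mul _]
    refine Finset.sum_congr rfl fun p _ => ?_
    rw [integral_finset_sum _ fun l _ => integrable_finset_sum _ fun s _ =>
      (integrable_mono4 hv k l p s).const_mul _]
    refine Finset.sum_congr rfl fun l _ => ?_
    rw [integral_finset_sum _ fun s _ => (integrable_mono4 hv k l p s).const_mul _]
    refine Finset.sum_congr rfl fun s _ => ?_
    rw [integral_const_mul, mono4 hv]
  rw [Finset.sum_congr rfl fun k _ => h1 k]
  rw [← sum_eval N]
  rw [Finset.mul_sum]
  refine Finset.sum_congr rfl fun k _ => ?_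
  rw [Finset.mul_sum]
  refine Finset.sum_congr rfl fun p _ => ?_
  rw [Finset.mul_sum]
  refine Finset.sum_congr rfl fun l _ => ?_
  rw [Finset.mul_sum]
  refine Finset.sum_congr rfl fun s _ => ?_
  ring

end Rows



section Marg

variable {D : ℕ} {E : Type*} [MeasurableSpace E] (μ : Measure E) [IsProbabilityMeasure μ]

lemma rep_one (g : E → ℝ) (i : Fin D) :
    (fun y : Fin D → E => g (y i)) = fun y => ∏ i', (if i' = i then g (y i') else 1) := by
  funext y
  rw [Finset.prod_ite_eq']
  simp

lemma rep_two {i i' : Fin D} (hii : i ≠ i') (g h : E → ℝ) :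
    (fun y : Fin D → E => g (y i) * h (y i')) =
      fun y => ∏ i'', ((if i'' = i then g (y i'') else 1) * (if i'' = i' then h (y i'') else 1)) := by
  funext y
  rw [Finset.prod_mul_distrib, Finset.prod_ite_eq', Finset.prod_ite_eq']
  simp

lemma pi_marg_one (g : E → ℝ) (i : Fin D) :
    ∫ y : Fin D → E, g (y i) ∂(Measure.pi fun _ => μ) = ∫ x, g x ∂μ := by
  rw [rep_one g i]
  have step : ∫ y : Fin D → E, ∏ i', (if i' = i then g (y i') else 1) ∂(Measure.pi fun _ => μ) =
      ∏ i' : Fin D, ∫ t, (if i' = i then g t else 1) ∂μ :=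
    integral_pi_prod μ (fun i' t => if i' = i then g t else 1)
  rw [step]
  have h : ∀ i' : Fin D, (∫ t, (if i' = i then g t else 1) ∂μ) =
      if i' = i then ∫ x, g x ∂μ else 1 := by
    intro i'; split_ifs
    · rfl
    · simp
  rw [Finset.prod_congr rfl fun i' _ => h i', Finset.prod_ite_eq']
  simp

lemma pi_marg_two {i i' : Fin D} (hii : i ≠ i') (g h : E → ℝ) :
    ∫ y : Fin D → E, g (y i) * h (y i') ∂(Measure.pi fun _ => μ) =
      (∫ x, g x ∂μ) * ∫ x, h x ∂μ := by
  rw [rep_two hii g h]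
  have step : ∫ y : Fin D → E,
        ∏ i'', ((if i'' = i then g (y i'') else 1) * (if i'' = i' then h (y i'') else 1))
        ∂(Measure.pi fun _ => μ) =
      ∏ i'' : Fin D, ∫ t, ((if i'' = i then g t else 1) * (if i'' = i' then h t else 1)) ∂μ :=
    integral_pi_prod μ (fun i'' t => (if i'' = i then g t else 1) * (if i'' = i' then h t else 1))
  rw [step]
  have hfac : ∀ i'' : Fin D, (∫ t, ((if i'' = i then g t else 1) * (if i'' = i' then h t else 1)) ∂μ)
      = (if i'' = i then ∫ x, g x ∂μ else 1) * (if i'' = i' then ∫ x, h x ∂μ else 1) := by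
    intro i''
    split_ifs with h1 h2
    · exact absurd (h1.symm.trans h2) hii
    · simp
    · simp
    · simp
  rw [Finset.prod_congr rfl fun i'' _ => hfac i'', Finset.prod_mul_distrib,
    Finset.prod_ite_eq', Finset.prod_ite_eq']
  simp

lemma pi_integrable_one {g : E → ℝ} (hg : Integrable g μ) (i : Fin D) :
    Integrable (fun y : Fin D → E => g (y i)) (Measure.pi fun _ => μ) := by
  rw [rep_one g i]
  refine integrable_pi_prod μ (fun i' t => if i' = i then g t else 1) fun i' => ?_
  split_ifs
  · exact hg
  · exact integrable_const 1

lemma pi_integrable_two {i i' : Fin D} (hii : i ≠ i') {g h : E → ℝ}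
    (hg : Integrable g μ) (hh : Integrable h μ) :
    Integrable (fun y : Fin D → E => g (y i) * h (y i')) (Measure.pi fun _ => μ) := by
  rw [rep_two hii g h]
  refine integrable_pi_prod μ
    (fun i'' t => (if i'' = i then g t else 1) * (if i'' = i' then h t else 1)) fun i'' => ?_
  rcases eq_or_ne i'' i with h1 | h1 <;> rcases eq_or_ne i'' i' with h2 | h2
  · exact absurd (h1.symm.trans h2) hii
  · simp only [if_pos h1, if_neg h2, mul_one]; exact hg
  · simp only [if_neg h1, if_pos h2, one_mul]; exact hh
  · simp only [if_neg h1, if_neg h2, mul_one]; exact integrable_const 1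

end Marg



section AX
variable {r : ℕ} {v : ℝ≥0}
end AX

section AX2
variable {D : ℕ} {E : Type*} [MeasurableSpace E] (μ : Measure E) [IsProbabilityMeasure μ]
end AX2

lemma measurable_qf {r : ℕ} (N : Matrix (Fin r) (Fin r) ℝ) : Measurable (qf N) := by
  unfold qf
  apply Finset.measurable_sum
  intro k _
  apply Finset.measurable_sum
  intro l _
  exact ((measurable_pi_apply k).mul (measurable_pi_apply l)).const_mul _

lemma frobInner_self_nonneg {n m : Type*} [Fintype n] [Fintype m] (X : Matrix n m ℝ) :
    0 ≤ frobInner X X :=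
  Finset.sum_nonneg fun i _ => Finset.sum_nonneg fun j _ => mul_self_nonneg _

lemma frobNorm_sq {n m : Type*} [Fintype n] [Fintype m] (X : Matrix n m ℝ) :
    frobNorm X ^ 2 = frobInner X X :=
  Real.sq_sqrt (frobInner_self_nonneg X)

theorem stmt7 (D r m : ℕ) (hD : 0 < D) (hr : 0 < r) (hm : 0 < m)
    (U V : Matrix (Fin r) (Fin m) ℝ) :
    variance (fun A => frobInner (A * U) (A * V)) (gaussianMatrix D r) =
      (frobNorm (V * Uᵀ) ^ 2 + ((V * Uᵀ) * (V * Uᵀ)).trace) / D ∧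
    variance (fun A => frobInner (A * U) (A * V)) (gaussianMatrix D r) ≤
      2 * frobNorm U ^ 2 * frobNorm V ^ 2 / D := by
  have hv : (D : ℝ≥0)⁻¹ ≠ 0 := by
    simp [Nat.pos_iff_ne_zero.mp hD]
  have hDR : (0:ℝ) < D := Nat.cast_pos.mpr hD
  set vD : ℝ≥0 := (D : ℝ≥0)⁻¹ with hvD
  have hvDR : (vD : ℝ) = 1 / (D : ℝ) := by
    rw [hvD]; push_cast; simp [one_div]
  set N : Matrix (Fin r) (Fin r) ℝ := U * Vᵀ with hN
  set ν : Measure (Fin r → ℝ) := Measure.pi fun _ : Fin r => gaussianReal 0 vD with hν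
  set μM : Measure (Fin D → Fin r → ℝ) := Measure.pi fun _ : Fin D => ν with hμM
  set f' : (Fin D → Fin r → ℝ) → ℝ := fun A => ∑ i, qf N (A i) with hf'
  set tN : ℝ := ∑ k, N k k with htN
  set S : ℝ := ∑ k, ∑ l, N k l * N k l with hS
  set T : ℝ := ∑ k, ∑ l, N k l * N l k with hT
  set Q1 : ℝ := ∫ x, qf N x ∂ν with hQ1
  set Q2 : ℝ := ∫ x, qf N x ^ 2 ∂ν with hQ2
  -- the function equality
  have f_eq : (fun A : Matrix (Fin D) (Fin r) ℝ => frobInner (A * U) (A * V)) =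
      fun A => ∑ i, qf N (A i) := by
    funext A
    unfold frobInner qf
    simp only [Matrix.mul_apply]
    refine Finset.sum_congr rfl fun i _ => ?_
    calc ∑ j, (∑ k, A i k * U k j) * (∑ l, A i l * V l j)
        = ∑ j, ∑ k, ∑ l, (A i k * U k j) * (A i l * V l j) := by
          refine Finset.sum_congr rfl fun j _ => ?_
          rw [Finset.sum_mul_sum]
      _ = ∑ k, ∑ j, ∑ l, (A i k * U k j) * (A i l * V l j) := Finset.sum_comm
      _ = ∑ k, ∑ l, ∑ j, (A i k * U k j) * (A i l * V l j) := by
          refine Finset.sum_congr rfl fun k _ => ?_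
          exact Finset.sum_comm
      _ = ∑ k, ∑ l, N k l * (A i k * A i l) := by
          refine Finset.sum_congr rfl fun k _ => Finset.sum_congr rfl fun l _ => ?_
          rw [hN, Matrix.mul_apply, Finset.sum_mul]
          refine Finset.sum_congr rfl fun j _ => ?_
          rw [Matrix.transpose_apply]
          ring
  -- integrability facts
  have hint1 : ∀ i : Fin D, Integrable (fun A : Fin D → Fin r → ℝ => qf N (A i)) μM :=
    fun i => pi_integrable_one ν (integrable_qf hv N) i
  have hintf : Integrable f' μM := integrable_finset_sum _ fun i _ => hint1 i
  have htermint : ∀ i i' : Fin D,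
      Integrable (fun A : Fin D → Fin r → ℝ => qf N (A i) * qf N (A i')) μM := by
    intro i i'
    rcases eq_or_ne i i' with rfl | hii
    · have h := pi_integrable_one ν (integrable_qf_sq hv N) i (D := D)
      have heq : (fun A : Fin D → Fin r → ℝ => qf N (A i) * qf N (A i)) =
          fun A => qf N (A i) ^ 2 := by funext A; rw [sq]
      rw [heq]; exact h
    · exact pi_integrable_two ν hii (integrable_qf hv N) (integrable_qf hv N)
  have hsq_eq : (fun A : Fin D → Fin r → ℝ => f' A ^ 2) =
      fun A => ∑ i, ∑ i', qf N (A i) * qf N (A i') := by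
    funext A
    rw [hf']
    simp only []
    rw [sq, Finset.sum_mul_sum]
  have hintf2 : Integrable (fun A => f' A ^ 2) μM := by
    rw [hsq_eq]
    exact integrable_finset_sum _ fun i _ => integrable_finset_sum _ fun i' _ => htermint i i'
  -- first moment
  have hEf : ∫ A, f' A ∂μM = D * Q1 := by
    rw [hf']
    simp only []
    rw [integral_finset_sum _ fun i _ => hint1 i]
    have : ∀ i : Fin D, ∫ A, qf N (A i) ∂μM = Q1 := fun i => pi_marg_one ν (qf N) i
    rw [Finset.sum_congr rfl fun i _ => this i, Finset.sum_const, Finset.card_univ,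
      Fintype.card_fin, nsmul_eq_mul]
  -- second moment
  have hterm : ∀ i i' : Fin D, ∫ A, qf N (A i) * qf N (A i') ∂μM =
      if i = i' then Q2 else Q1 ^ 2 := by
    intro i i'
    rcases eq_or_ne i i' with rfl | hii
    · rw [if_pos rfl]
      have heq : (fun A : Fin D → Fin r → ℝ => qf N (A i) * qf N (A i)) =
          fun A => (fun x => qf N x ^ 2) (A i) := by funext A; exact (sq _).symm
      rw [heq]
      exact pi_marg_one ν (fun x => qf N x ^ 2) i
    · rw [if_neg hii, pi_marg_two ν hii (qf N) (qf N), sq]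
  have hEf2 : ∫ A, f' A ^ 2 ∂μM = D * Q2 + ((D : ℝ) ^ 2 - D) * Q1 ^ 2 := by
    rw [hsq_eq]
    rw [integral_finset_sum _ fun i _ => integrable_finset_sum _ fun i' _ => htermint i i']
    have hrow : ∀ i : Fin D, ∫ A, ∑ i', qf N (A i) * qf N (A i') ∂μM =
        Q2 + ((D : ℝ) - 1) * Q1 ^ 2 := by
      intro i
      rw [integral_finset_sum _ fun i' _ => htermint i i']
      rw [Finset.sum_congr rfl fun i' _ => hterm i i']
      have hsplit : ∀ i' : Fin D, (if i = i' then Q2 else Q1 ^ 2) =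
          Q1 ^ 2 + (if i = i' then Q2 - Q1 ^ 2 else 0) := by
        intro i'; split_ifs <;> ring
      rw [Finset.sum_congr rfl fun i' _ => hsplit i', Finset.sum_add_distrib,
        Finset.sum_const, Finset.sum_ite_eq, Finset.card_univ, Fintype.card_fin,
        nsmul_eq_mul]
      simp only [Finset.mem_univ, if_true]
      ring
    rw [Finset.sum_congr rfl fun i _ => hrow i, Finset.sum_const, Finset.card_univ,
      Fintype.card_fin, nsmul_eq_mul]
    ring
  -- measurability
  have hmeas : AEStronglyMeasurable f' μM := by
    refine Measurable.aestronglyMeasurable ?_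
    exact Finset.measurable_sum _ fun i _ => (measurable_qf N).comp (measurable_pi_apply i)
  have hmem : MemLp f' 2 μM := (memLp_two_iff_integrable_sq hmeas).mpr hintf2
  -- variance
  have hvar : variance f' μM = (S + T) / D := by
    rw [variance_eq_sub hmem]
    have h1 : μM[f' ^ 2] = ∫ A, f' A ^ 2 ∂μM := by
      congr 1
    rw [h1, hEf2, hEf, hQ1, hQ2, integral_qf hv N, integral_qf_sq hv N, ← htN, ← hS, ← hT,
      hvDR]
    field_simp
    ring
  -- transfer to the original statement
  have hvar' : variance (fun A => frobInner (A * U) (A * V)) (gaussianMatrix D r) =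
      (S + T) / D := by
    rw [f_eq]
    exact hvar
  -- identify S and T with the matrix quantities
  have hVU : ∀ k l, (V * Uᵀ) k l = N l k := by
    intro k l
    rw [hN, Matrix.mul_apply, Matrix.mul_apply]
    refine Finset.sum_congr rfl fun j _ => ?_
    rw [Matrix.transpose_apply, Matrix.transpose_apply]
    ring
  have hfrob : frobNorm (V * Uᵀ) ^ 2 = S := by
    calc frobNorm (V * Uᵀ) ^ 2 = ∑ k, ∑ l, (V * Uᵀ) k l * (V * Uᵀ) k l := by
          rw [frobNorm_sq]; rfl
      _ = ∑ k, ∑ l, N l k * N l k :=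
          Finset.sum_congr rfl fun k _ => Finset.sum_congr rfl fun l _ => by rw [hVU k l]
      _ = S := by rw [hS]; exact Finset.sum_comm
  have htrace : ((V * Uᵀ) * (V * Uᵀ)).trace = T := by
    calc ((V * Uᵀ) * (V * Uᵀ)).trace = ∑ k, ∑ l, (V * Uᵀ) k l * (V * Uᵀ) l k := by
          simp only [Matrix.trace, Matrix.diag_apply, Matrix.mul_apply]
      _ = ∑ k, ∑ l, N l k * N k l :=
          Finset.sum_congr rfl fun k _ => Finset.sum_congr rfl fun l _ => by
            rw [hVU k l, hVU l k]
      _ = T := by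
          rw [hT]
          exact Finset.sum_congr rfl fun k _ => Finset.sum_congr rfl fun l _ => mul_comm _ _
  constructor
  · rw [hvar', hfrob, htrace]
  · rw [hvar']
    -- inequality
    have hSU : frobNorm U ^ 2 = ∑ i, ∑ j, U i j * U i j := by
      rw [frobNorm_sq]; rfl
    have hSV : frobNorm V ^ 2 = ∑ i, ∑ j, V i j * V i j := by
      rw [frobNorm_sq]; rfl
    have hTS : T ≤ S := by
      have hnn : 0 ≤ ∑ k, ∑ l, (N k l - N l k) ^ 2 :=
        Finset.sum_nonneg fun k _ => Finset.sum_nonneg fun l _ => sq_nonneg _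
      have hexp : ∑ k, ∑ l, (N k l - N l k) ^ 2 = 2 * S - 2 * T := by
        have h : ∀ k l : Fin r, (N k l - N l k) ^ 2 =
            N k l * N k l + N l k * N l k - 2 * (N k l * N l k) := by intro k l; ring
        rw [Finset.sum_congr rfl fun k _ => Finset.sum_congr rfl fun l _ => h k l]
        have hswap : ∑ k, ∑ l, N l k * N l k = S := by rw [hS]; exact Finset.sum_comm
        simp only [Finset.sum_sub_distrib, Finset.sum_add_distrib, ← Finset.mul_sum]
        rw [hswap, ← hS, ← hT]
        ring
      linarith
    have hCS : S ≤ (∑ i, ∑ j, U i j * U i j) * (∑ i, ∑ j, V i j * V i j) := by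
      have hterm : ∀ k l : Fin r, N k l * N k l ≤
          (∑ j, U k j * U k j) * (∑ j, V l j * V l j) := by
        intro k l
        have h := Finset.sum_mul_sq_le_sq_mul_sq Finset.univ (fun j => U k j) (fun j => V l j)
        have hNkl : N k l = ∑ j, U k j * V l j := by
          rw [hN, Matrix.mul_apply]
          exact Finset.sum_congr rfl fun j _ => by rw [Matrix.transpose_apply]
        calc N k l * N k l = (∑ j, U k j * V l j) ^ 2 := by rw [hNkl]; ring
          _ ≤ (∑ j, U k j ^ 2) * ∑ j, V l j ^ 2 := h
          _ = (∑ j, U k j * U k j) * (∑ j, V l j * V l j) := by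
              simp only [sq]
      calc S ≤ ∑ k, ∑ l, (∑ j, U k j * U k j) * (∑ j, V l j * V l j) := by
            rw [hS]
            exact Finset.sum_le_sum fun k _ => Finset.sum_le_sum fun l _ => hterm k l
        _ = (∑ k, ∑ j, U k j * U k j) * (∑ l, ∑ j, V l j * V l j) := by
            rw [Finset.sum_mul_sum]
    rw [hSU, hSV]
    have hnum : S + T ≤ 2 * ((∑ i, ∑ j, U i j * U i j) * (∑ i, ∑ j, V i j * V i j)) := by
      linarith
    calc (S + T) / D ≤
        2 * ((∑ i, ∑ j, U i j * U i j) * (∑ i, ∑ j, V i j * V i j)) / D := by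
          gcongr
      _ = 2 * (∑ i, ∑ j, U i j * U i j) * (∑ i, ∑ j, V i j * V i j) / D := by
          ring
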